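/- arXiv:2404.12688 — 4 statements merged into one kernel-verified Lean document; each statement's English description precedes it below -/
import Mathlib

section
/- Let (Θ, P) be a probability space and (D, ν) a σ-finite measure space, and let G : Θ × D → ℝ be measurable and square-integrable on Θ × D with covariance kernel k(x,y) = ∫_Θ G(θ,x) G(θ,y) dP(θ). Suppose u_i, u_j ∈ L²(D, ν) are orthonormal eigenfunctions of the kernel, i.e., ∫_D k(x,y) u_i(y) dν(y) = λ_i u_i(x) for ν-a.e. x and similarly for u_j, with λ_i, λ_j > 0, and ∫_D u_i u_j dν = δ_{ij}, ∫_D u_i² dν = ∫_D u_j² dν = 1. Define the Karhunen–Loève coordinates η_i(θ) = λ_i^{-1/2} ∫_D G(θ,x) u_i(x) dν(x) and η_j likewise. Then ∫_Θ η_i(θ) η_j(θ) dP(θ) = δ_{ij}: the KL coordinates are uncorrelated with unit variance. -/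
open MeasureTheory
open scoped ENNReal NNReal

/-- Karhunen–Loève coordinates on orthonormal eigenfunctions of the
covariance kernel are uncorrelated with unit variance. -/
theorem stmt_1 {Θ D ι : Type*} [MeasurableSpace Θ] [MeasurableSpace D] [DecidableEq ι]
    (P : Measure Θ) [IsProbabilityMeasure P] (ν : Measure D) [SigmaFinite ν]
    (G : Θ → D → ℝ) (hG : Measurable (Function.uncurry G))
    (hL2 : ∫⁻ θ, ∫⁻ x, ENNReal.ofReal ((G θ x) ^ 2) ∂ν ∂P < ⊤)
    (u : ι → D → ℝ) (lam : ι → ℝ) (i j : ι)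
    (hu : ∀ m, m = i ∨ m = j → MemLp (u m) 2 ν)
    (hlami : 0 < lam i) (hlamj : 0 < lam j)
    (heig : ∀ m, m = i ∨ m = j → ∀ᵐ x ∂ν,
      ∫ y, (∫ θ, G θ x * G θ y ∂P) * u m y ∂ν = lam m * u m x)
    (horth : ∀ m n, (m = i ∨ m = j) → (n = i ∨ n = j) →
      ∫ x, u m x * u n x ∂ν = if m = n then 1 else 0) :
    ∫ θ, ((Real.sqrt (lam i))⁻¹ * ∫ x, G θ x * u i x ∂ν) *
        ((Real.sqrt (lam j))⁻¹ * ∫ x, G θ x * u j x ∂ν) ∂P =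
      if i = j then 1 else 0 := by
  classical
  have hui := hu i (Or.inl rfl)
  have huj := hu j (Or.inr rfl)
  have hGmx : ∀ θ, Measurable (G θ) := fun θ => hG.of_uncurry_left
  -- conjugate exponents 2, 2
  have hpq : Real.HolderConjugate 2 2 := Real.HolderConjugate.two_two
  -- nnnorm squared = ofReal of square
  have hsq : ∀ a : ℝ, ((‖a‖₊ : ℝ≥0∞)) ^ (2 : ℝ) = ENNReal.ofReal (a ^ 2) := by
    intro a
    rw [← enorm_eq_nnnorm, ← ofReal_norm, ENNReal.ofReal_rpow_of_nonneg (norm_nonneg a)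
      (by norm_num : (0:ℝ) ≤ 2)]
    congr 1
    rw [show (2:ℝ) = ((2:ℕ):ℝ) by norm_num, Real.rpow_natCast, Real.norm_eq_abs, sq_abs]
  -- the big integrand
  set H : Θ × (D × D) → ℝ :=
    fun p => (G p.1 p.2.1 * u i p.2.1) * (G p.1 p.2.2 * u j p.2.2) with hHdef
  -- measurability
  have hqmp1 : Measure.QuasiMeasurePreserving (fun p : Θ × (D × D) => p.2.1)
      (P.prod (ν.prod ν)) ν :=
    Measure.quasiMeasurePreserving_fst.comp Measure.quasiMeasurePreserving_snd
  have hqmp2 : Measure.QuasiMeasurePreserving (fun p : Θ × (D × D) => p.2.2)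
      (P.prod (ν.prod ν)) ν :=
    Measure.quasiMeasurePreserving_snd.comp Measure.quasiMeasurePreserving_snd
  have hGm1 : Measurable fun p : Θ × (D × D) => G p.1 p.2.1 :=
    hG.comp (measurable_fst.prodMk (measurable_fst.comp measurable_snd))
  have hGm2 : Measurable fun p : Θ × (D × D) => G p.1 p.2.2 :=
    hG.comp (measurable_fst.prodMk (measurable_snd.comp measurable_snd))
  have hHm : AEStronglyMeasurable H (P.prod (ν.prod ν)) :=
    ((hGm1.aestronglyMeasurable.mul
      (hui.aestronglyMeasurable.comp_quasiMeasurePreserving hqmp1)).mul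
      (hGm2.aestronglyMeasurable.mul
      (huj.aestronglyMeasurable.comp_quasiMeasurePreserving hqmp2)))
  -- finiteness of L² norms of eigenfunctions
  have hCi : (∫⁻ x, ((‖u i x‖₊ : ℝ≥0∞)) ^ (2 : ℝ) ∂ν) < ⊤ := by
    have := lintegral_rpow_enorm_lt_top_of_eLpNorm_lt_top
      (f := u i) (two_ne_zero) (ENNReal.ofNat_ne_top) hui.2
    simpa [enorm_eq_nnnorm] using this
  have hCj : (∫⁻ x, ((‖u j x‖₊ : ℝ≥0∞)) ^ (2 : ℝ) ∂ν) < ⊤ := by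
    have := lintegral_rpow_enorm_lt_top_of_eLpNorm_lt_top
      (f := u j) (two_ne_zero) (ENNReal.ofNat_ne_top) huj.2
    simpa [enorm_eq_nnnorm] using this
  set Ci : ℝ≥0∞ := (∫⁻ x, ((‖u i x‖₊ : ℝ≥0∞)) ^ (2 : ℝ) ∂ν) ^ (1/2 : ℝ) with hCidef
  set Cj : ℝ≥0∞ := (∫⁻ x, ((‖u j x‖₊ : ℝ≥0∞)) ^ (2 : ℝ) ∂ν) ^ (1/2 : ℝ) with hCjdef
  have hCine : Ci ≠ ⊤ := by
    rw [hCidef]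
    exact (ENNReal.rpow_lt_top_of_nonneg (by norm_num) hCi.ne).ne
  have hCjne : Cj ≠ ⊤ := by
    rw [hCjdef]
    exact (ENNReal.rpow_lt_top_of_nonneg (by norm_num) hCj.ne).ne
  set S : Θ → ℝ≥0∞ := fun θ => ∫⁻ x, ((‖G θ x‖₊ : ℝ≥0∞)) ^ (2 : ℝ) ∂ν with hSdef
  have hSint : ∫⁻ θ, S θ ∂P < ⊤ := by
    refine lt_of_eq_of_lt ?_ hL2
    refine lintegral_congr fun θ => lintegral_congr fun x => hsq _
  -- Hölder bound per θ and index
  have hHolder : ∀ (θ : Θ) (v : D → ℝ), MemLp v 2 ν →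
      (∫⁻ x, (‖G θ x * v x‖₊ : ℝ≥0∞) ∂ν) ≤
        (S θ) ^ (1/2 : ℝ) * (∫⁻ x, ((‖v x‖₊ : ℝ≥0∞)) ^ (2 : ℝ) ∂ν) ^ (1/2 : ℝ) := by
    intro θ v hv
    have h := ENNReal.lintegral_mul_le_Lp_mul_Lq ν hpq
      ((hGmx θ).nnnorm.coe_nnreal_ennreal.aemeasurable)
      (hv.aestronglyMeasurable.enorm)
    refine le_trans (le_of_eq ?_) h
    refine lintegral_congr fun x => ?_
    simp [nnnorm_mul, ENNReal.coe_mul, enorm_eq_nnnorm]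
  -- integrability of H
  have hHint : Integrable H (P.prod (ν.prod ν)) := by
    refine ⟨hHm, ?_⟩
    rw [hasFiniteIntegral_def]
    rw [lintegral_prod _ hHm.enorm]
    calc ∫⁻ θ, ∫⁻ z, (‖H (θ, z)‖₊ : ℝ≥0∞) ∂(ν.prod ν) ∂P
        ≤ ∫⁻ θ, (Ci * Cj) * S θ ∂P := by
          refine lintegral_mono fun θ => ?_
          have hsplit : ∫⁻ z, (‖H (θ, z)‖₊ : ℝ≥0∞) ∂(ν.prod ν) =
              (∫⁻ x, (‖G θ x * u i x‖₊ : ℝ≥0∞) ∂ν) *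
              (∫⁻ y, (‖G θ y * u j y‖₊ : ℝ≥0∞) ∂ν) := by
            have hfi : AEMeasurable (fun x => (‖G θ x * u i x‖₊ : ℝ≥0∞)) ν :=
              ((hGmx θ).aestronglyMeasurable.mul hui.aestronglyMeasurable).enorm
            have hfj : AEMeasurable (fun y => (‖G θ y * u j y‖₊ : ℝ≥0∞)) ν :=
              ((hGmx θ).aestronglyMeasurable.mul huj.aestronglyMeasurable).enorm
            rw [← lintegral_prod_mul hfi hfj]
            refine lintegral_congr fun z => ?_
            simp [hHdef, nnnorm_mul, ENNReal.coe_mul]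
          rw [hsplit]
          calc (∫⁻ x, (‖G θ x * u i x‖₊ : ℝ≥0∞) ∂ν) *
              (∫⁻ y, (‖G θ y * u j y‖₊ : ℝ≥0∞) ∂ν)
              ≤ ((S θ) ^ (1/2 : ℝ) * Ci) * ((S θ) ^ (1/2 : ℝ) * Cj) :=
                mul_le_mul' (hHolder θ (u i) hui) (hHolder θ (u j) huj)
            _ = (Ci * Cj) * S θ := by
                have : (S θ) ^ (1/2 : ℝ) * (S θ) ^ (1/2 : ℝ) = S θ := by
                  rw [← ENNReal.rpow_add_of_nonneg _ _ (by norm_num) (by norm_num)]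
                  norm_num
                calc ((S θ) ^ (1/2 : ℝ) * Ci) * ((S θ) ^ (1/2 : ℝ) * Cj)
                    = (Ci * Cj) * ((S θ) ^ (1/2 : ℝ) * (S θ) ^ (1/2 : ℝ)) := by ring
                  _ = (Ci * Cj) * S θ := by rw [this]
      _ = (Ci * Cj) * ∫⁻ θ, S θ ∂P := lintegral_const_mul' _ _
            (ENNReal.mul_ne_top hCine hCjne)
      _ < ⊤ := ENNReal.mul_lt_top (ENNReal.mul_lt_top hCine.lt_top hCjne.lt_top) hSint
  -- main computation
  have key0 : ∫ θ, (∫ x, G θ x * u i x ∂ν) * (∫ y, G θ y * u j y ∂ν) ∂P =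
      lam j * (if i = j then 1 else 0) := by
    calc ∫ θ, (∫ x, G θ x * u i x ∂ν) * (∫ y, G θ y * u j y ∂ν) ∂P
        = ∫ θ, ∫ z, H (θ, z) ∂(ν.prod ν) ∂P := by
          refine integral_congr_ae (Filter.Eventually.of_forall fun θ => ?_)
          exact (integral_prod_mul (fun x => G θ x * u i x) (fun y => G θ y * u j y)).symm
      _ = ∫ z, ∫ θ, H (θ, z) ∂P ∂(ν.prod ν) :=
          integral_integral_swap (f := fun θ z => H (θ, z)) hHint
      _ = ∫ x, ∫ y, ∫ θ, H (θ, (x, y)) ∂P ∂ν ∂ν :=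
          integral_prod _ hHint.integral_prod_right
      _ = ∫ x, ∫ y, (u i x * u j y) * ∫ θ, G θ x * G θ y ∂P ∂ν ∂ν := by
          refine integral_congr_ae (Filter.Eventually.of_forall fun x =>
            integral_congr_ae (Filter.Eventually.of_forall fun y => ?_))
          show ∫ θ, H (θ, (x, y)) ∂P = (u i x * u j y) * ∫ θ, G θ x * G θ y ∂P
          rw [← integral_const_mul]
          exact integral_congr_ae (Filter.Eventually.of_forall fun θ => by
            simp only [hHdef]; ring)
      _ = ∫ x, u i x * (lam j * u j x) ∂ν := by
          refine integral_congr_ae ?_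
          filter_upwards [heig j (Or.inr rfl)] with x hx
          calc ∫ y, (u i x * u j y) * ∫ θ, G θ x * G θ y ∂P ∂ν
              = u i x * ∫ y, (∫ θ, G θ x * G θ y ∂P) * u j y ∂ν := by
                rw [← integral_const_mul]
                exact integral_congr_ae (Filter.Eventually.of_forall fun y => by ring)
            _ = u i x * (lam j * u j x) := by rw [hx]
      _ = lam j * ∫ x, u i x * u j x ∂ν := by
          rw [← integral_const_mul]
          exact integral_congr_ae (Filter.Eventually.of_forall fun x => by ring)
      _ = lam j * (if i = j then 1 else 0) := by
          rw [horth i j (Or.inl rfl) (Or.inr rfl)]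
  -- conclude
  calc ∫ θ, ((Real.sqrt (lam i))⁻¹ * ∫ x, G θ x * u i x ∂ν) *
        ((Real.sqrt (lam j))⁻¹ * ∫ x, G θ x * u j x ∂ν) ∂P
      = ∫ θ, ((Real.sqrt (lam i))⁻¹ * (Real.sqrt (lam j))⁻¹) *
          ((∫ x, G θ x * u i x ∂ν) * (∫ x, G θ x * u j x ∂ν)) ∂P := by
        exact integral_congr_ae (Filter.Eventually.of_forall fun θ => by ring)
    _ = ((Real.sqrt (lam i))⁻¹ * (Real.sqrt (lam j))⁻¹) *
          (lam j * (if i = j then 1 else 0)) := by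
        rw [integral_const_mul, key0]
    _ = if i = j then 1 else 0 := by
        by_cases h : i = j
        · subst h
          have h1 : (Real.sqrt (lam i))⁻¹ * (Real.sqrt (lam i))⁻¹ * lam i = 1 := by
            rw [← mul_inv, Real.mul_self_sqrt hlami.le]
            exact inv_mul_cancel₀ hlami.ne'
          simpa using h1
        · simp [h]
end

section
/- Let r ≥ 1 and let (ℍ, π) be a probability space. Let Σ : ℍ → (symmetric positive definite r × r real matrices) be measurable with each matrix entry q ↦ Σ(q)_{ij} integrable, satisfying ∫_ℍ Σ(q) dπ(q) = I_r (entrywise), and with q ↦ log det Σ(q) integrable. Then for every μ ∈ ℝ^r and every symmetric positive definite r × r matrix C, ∫_ℍ D_KL(N(0, Σ(q)) ‖ N(μ, C)) dπ(q) ≥ ∫_ℍ D_KL(N(0, Σ(q)) ‖ N(0, I_r)) dπ(q), with equality if and only if μ = 0 and C = I_r. That is, the standard Gaussian N(0, I_r) is the unique Gaussian distribution minimizing the π-averaged Kullback–Leibler divergence from the conditional priors N(0, Σ(q)). -/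
open MeasureTheory Matrix

/-- The multivariate Gaussian measure `N(m, S)` on `n → ℝ`, defined through its
Lebesgue density `x ↦ (2π)^{-card n/2} (det S)^{-1/2} exp(-(x-m)ᵀ S⁻¹ (x-m)/2)`. -/
noncomputable def mvGaussian {n : Type*} [Fintype n] [DecidableEq n]
    (m : n → ℝ) (S : Matrix n n ℝ) : Measure (n → ℝ) :=
  volume.withDensity fun x =>
    ENNReal.ofReal ((Real.sqrt ((2 * Real.pi) ^ Fintype.card n * S.det))⁻¹ *
      Real.exp (-((x - m) ⬝ᵥ S⁻¹ *ᵥ (x - m)) / 2))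

/-- The Kullback–Leibler divergence `D_KL(μ ‖ ν) = ∫ log (dμ/dν) dμ`. -/
noncomputable def klDiv {α : Type*} [MeasurableSpace α] (μ ν : Measure α) : ℝ :=
  ∫ x, Real.log (μ.rnDeriv ν x).toReal ∂μ

namespace Stmt11
open Real Set
open scoped MatrixOrder

noncomputable def phi (t : ℝ) : ℝ := Real.exp (-(1/2) * t ^ 2)

lemma phi_pos (t : ℝ) : 0 < phi t := Real.exp_pos _

lemma integrable_phi : Integrable phi :=
  integrable_exp_neg_mul_sq (by norm_num : (0:ℝ) < 1/2)

lemma integral_phi : ∫ t, phi t = Real.sqrt (2 * π) := by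
  have h := integral_gaussian (1/2:ℝ)
  rw [show π/(1/2:ℝ) = 2*π by ring] at h
  simpa only [phi] using h

lemma integrable_id_phi : Integrable (fun t => t * phi t) :=
  integrable_mul_exp_neg_mul_sq (by norm_num : (0:ℝ) < 1/2)

lemma integral_id_phi : ∫ t, t * phi t = 0 := by
  have h : ∫ t, (-t) * phi (-t) = ∫ t, t * phi t :=
    integral_neg_eq_self (fun t => t * phi t) volume
  have h2 : ∀ t : ℝ, (-t) * phi (-t) = -(t * phi t) := by
    intro t; simp [phi, neg_mul]
  simp_rw [h2, integral_neg] at h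
  linarith

lemma integrable_sq_phi : Integrable (fun t => t ^ 2 * phi t) := by
  have := integrable_rpow_mul_exp_neg_mul_sq (by norm_num : (0:ℝ) < 1/2)
    (by norm_num : (-1:ℝ) < ((2:ℕ):ℝ))
  simpa [phi, Real.rpow_natCast] using this

lemma integral_sq_phi : ∫ t, t ^ 2 * phi t = Real.sqrt (2 * π) := by
  -- on Ioi 0: ∫ (t^2 φ - φ) = 0 via derivative of -t * φ t
  have hderiv : ∀ t : ℝ, HasDerivAt (fun u : ℝ => -u * phi u) (t ^ 2 * phi t - phi t) t := by
    intro t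
    have h1 : HasDerivAt (fun u : ℝ => -(1/2) * u ^ 2) (-(1/2) * (2 * t)) t := by
      simpa using ((hasDerivAt_pow 2 t).const_mul (-(1/2) : ℝ))
    have h2 : HasDerivAt phi (Real.exp (-(1/2) * t ^ 2) * (-(1/2) * (2 * t))) t := h1.exp
    have h3 : HasDerivAt (fun u : ℝ => -u) (-1 : ℝ) t := (hasDerivAt_id t).neg
    have := h3.mul h2
    refine this.congr_deriv ?_
    simp [phi]; ring
  have htend : Filter.Tendsto (fun t : ℝ => -t * phi t) Filter.atTop (nhds 0) := by
    have : (fun x : ℝ => x ^ (1:ℝ) * Real.exp (-(1/2) * x ^ 2)) =o[Filter.atTop]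
        fun x : ℝ => Real.exp (-(1/2) * x) :=
      rpow_mul_exp_neg_mul_sq_isLittleO_exp_neg (by norm_num) 1
    have h0 : Filter.Tendsto (fun x : ℝ => x ^ (1:ℝ) * Real.exp (-(1/2) * x ^ 2))
        Filter.atTop (nhds 0) :=
      this.tendsto_zero_of_tendsto
        (Real.tendsto_exp_atBot.comp <|
          Filter.tendsto_id.const_mul_atTop_of_neg (by norm_num))
    have h1 : Filter.Tendsto (fun t : ℝ => t * phi t) Filter.atTop (nhds 0) := by
      refine h0.congr' ?_
      filter_upwards [Filter.eventually_ge_atTop (0:ℝ)] with t ht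
      rw [Real.rpow_one]; rfl
    simpa [neg_mul] using h1.neg
  have hint : IntegrableOn (fun t : ℝ => t ^ 2 * phi t - phi t) (Ioi 0) :=
    (integrable_sq_phi.sub integrable_phi).integrableOn
  have key : ∫ t in Ioi (0:ℝ), (t ^ 2 * phi t - phi t) = 0 - (-(0:ℝ) * phi 0) := by
    refine integral_Ioi_of_hasDerivAt_of_tendsto ?_ (fun t _ => hderiv t) hint htend
    exact (hderiv 0).continuousAt.continuousWithinAt
  rw [integral_sub integrable_sq_phi.integrableOn integrable_phi.integrableOn] at key
  simp only [neg_zero, zero_mul, sub_zero, neg_mul] at key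
  have hIoi : ∫ t in Ioi (0:ℝ), t ^ 2 * phi t = ∫ t in Ioi (0:ℝ), phi t := by linarith
  have e1 : ∫ t : ℝ, t ^ 2 * phi t = 2 * ∫ t in Ioi (0:ℝ), t ^ 2 * phi t := by
    rw [← integral_comp_abs (f := fun u => u ^ 2 * phi u)]
    congr 1; funext x; simp [phi, sq_abs]
  have e2 : ∫ t : ℝ, phi t = 2 * ∫ t in Ioi (0:ℝ), phi t := by
    rw [← integral_comp_abs (f := fun u => phi u)]
    congr 1; funext x; simp [phi, sq_abs]
  rw [e1, hIoi, ← e2, integral_phi]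


variable {r : ℕ}

noncomputable def Phi (x : Fin r → ℝ) : ℝ := ∏ i, phi (x i)

lemma Phi_eq (x : Fin r → ℝ) : Real.exp (-(x ⬝ᵥ x) / 2) = Phi x := by
  unfold Phi phi
  rw [← Real.exp_sum]
  congr 1
  simp only [dotProduct]
  rw [neg_div, Finset.sum_div, ← Finset.sum_neg_distrib]
  exact Finset.sum_congr rfl fun i _ => by ring

lemma Phi_pos (x : Fin r → ℝ) : 0 < Phi x := Finset.prod_pos fun i _ => phi_pos _

lemma integrable_Phi : Integrable (Phi (r := r)) :=
  Integrable.fintype_prod (f := fun _ : Fin r => phi) fun _ => integrable_phi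

lemma integral_Phi : ∫ x : Fin r → ℝ, Phi x = Real.sqrt (2 * π) ^ r := by
  unfold Phi
  rw [volume_pi, integral_fintype_prod_eq_pow phi, integral_phi, Fintype.card_fin]

/-- auxiliary factor functions -/
noncomputable def F (i j k : Fin r) (t : ℝ) : ℝ :=
  (if k = i then t else 1) * ((if k = j then t else 1) * phi t)

lemma prod_F (i j : Fin r) (x : Fin r → ℝ) :
    ∏ k, F i j k (x k) = x i * x j * Phi x := by
  simp only [F, Finset.prod_mul_distrib, Phi]
  rw [Finset.prod_ite_eq' Finset.univ i (fun k => x k),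
    Finset.prod_ite_eq' Finset.univ j (fun k => x k)]
  simp [mul_assoc]

lemma integrable_F (i j k : Fin r) : Integrable (F i j k) := by
  unfold F
  by_cases hi : k = i
  · by_cases hj : k = j
    · simp only [if_pos hi, if_pos hj]
      simpa [sq, mul_assoc] using integrable_sq_phi
    · simp only [if_pos hi, if_neg hj, one_mul]
      exact integrable_id_phi
  · by_cases hj : k = j
    · simp only [if_neg hi, if_pos hj, one_mul]
      exact integrable_id_phi
    · simp only [if_neg hi, if_neg hj, one_mul]
      exact integrable_phi

lemma integrable_mul2_Phi (i j : Fin r) :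
    Integrable (fun x : Fin r → ℝ => x i * x j * Phi x) := by
  have h := Integrable.fintype_prod (f := F i j) (fun k => integrable_F i j k)
  simp only [prod_F] at h
  exact h

lemma integral_mul2_Phi (i j : Fin r) :
    ∫ x : Fin r → ℝ, x i * x j * Phi x
      = Real.sqrt (2 * π) ^ r * (1 : Matrix (Fin r) (Fin r) ℝ) i j := by
  have h : ∫ x : Fin r → ℝ, x i * x j * Phi x = ∏ k, ∫ t, F i j k t := by
    rw [volume_pi, ← integral_fintype_prod_eq_prod (F i j)]
    simp_rw [prod_F]
  rw [h, Matrix.one_apply]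
  by_cases hij : i = j
  · subst hij
    have hk : ∀ k : Fin r, ∫ t, F i i k t = Real.sqrt (2 * π) := by
      intro k
      by_cases hk : k = i
      · subst hk
        simp only [F, if_pos rfl, ite_true]
        rw [show (fun t : ℝ => t * (t * phi t)) = fun t => t ^ 2 * phi t by
          funext t; ring]
        exact integral_sq_phi
      · simp only [F, if_neg hk, one_mul]
        exact integral_phi
    simp [hk, Finset.prod_const, Finset.card_univ]
  · have h0 : ∫ t, F i j i t = 0 := by
      simp only [F, if_pos rfl, if_neg (fun h => hij (h ▸ rfl) : ¬ i = j), one_mul]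
      exact integral_id_phi
    rw [Finset.prod_eq_zero (Finset.mem_univ i) h0]
    simp [hij]

noncomputable def G (i k : Fin r) (t : ℝ) : ℝ := (if k = i then t else 1) * phi t

lemma prod_G (i : Fin r) (x : Fin r → ℝ) : ∏ k, G i k (x k) = x i * Phi x := by
  simp only [G, Finset.prod_mul_distrib, Phi]
  rw [Finset.prod_ite_eq' Finset.univ i (fun k => x k)]
  simp

lemma integrable_G (i k : Fin r) : Integrable (G i k) := by
  unfold G
  by_cases hi : k = i
  · simp only [if_pos hi]; exact integrable_id_phi
  · simp only [if_neg hi, one_mul]; exact integrable_phi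

lemma integrable_mul1_Phi (i : Fin r) : Integrable (fun x : Fin r → ℝ => x i * Phi x) := by
  have h := Integrable.fintype_prod (f := G i) (fun k => integrable_G i k)
  simp only [prod_G] at h
  exact h

lemma integral_mul1_Phi (i : Fin r) : ∫ x : Fin r → ℝ, x i * Phi x = 0 := by
  have h : ∫ x : Fin r → ℝ, x i * Phi x = ∏ k, ∫ t, G i k t := by
    rw [volume_pi, ← integral_fintype_prod_eq_prod (G i)]
    simp_rw [prod_G]
  rw [h]
  refine Finset.prod_eq_zero (Finset.mem_univ i) ?_
  simp only [G, if_pos rfl]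
  exact integral_id_phi


/-! ### densities -/

noncomputable def gc (r : ℕ) (S : Matrix (Fin r) (Fin r) ℝ) : ℝ :=
  (Real.sqrt ((2 * π) ^ r * S.det))⁻¹

noncomputable def gd (m : Fin r → ℝ) (S : Matrix (Fin r) (Fin r) ℝ) (x : Fin r → ℝ) : ℝ :=
  gc r S * Real.exp (-((x - m) ⬝ᵥ S⁻¹ *ᵥ (x - m)) / 2)

lemma two_pi_pos : (0:ℝ) < 2 * π := by positivity

lemma sqrt_two_pi_pow_pos : (0:ℝ) < Real.sqrt (2 * π) ^ r :=
  pow_pos (Real.sqrt_pos.mpr two_pi_pos) r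

lemma sqrt_pow_eq {a : ℝ} (ha : 0 ≤ a) (n : ℕ) : Real.sqrt (a ^ n) = Real.sqrt a ^ n := by
  rw [show a ^ n = (Real.sqrt a ^ n) ^ 2 by
      rw [← pow_mul, mul_comm, pow_mul, Real.sq_sqrt ha],
    Real.sqrt_sq (by positivity)]

lemma gc_pos {S : Matrix (Fin r) (Fin r) ℝ} (hS : S.PosDef) : 0 < gc r S := by
  have hd := hS.det_pos
  have : (0:ℝ) < (2 * π) ^ r * S.det := by positivity
  exact inv_pos.mpr (Real.sqrt_pos.mpr this)

lemma gc_eq {S : Matrix (Fin r) (Fin r) ℝ} (_hS : S.PosDef) :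
    gc r S = (Real.sqrt (2 * π) ^ r)⁻¹ * (Real.sqrt S.det)⁻¹ := by
  rw [gc, Real.sqrt_mul (by positivity) _, mul_inv, sqrt_pow_eq two_pi_pos.le]

lemma gd_pos {S : Matrix (Fin r) (Fin r) ℝ} (hS : S.PosDef) (m x : Fin r → ℝ) :
    0 < gd m S x := mul_pos (gc_pos hS) (Real.exp_pos _)

lemma measurable_quadform (M : Matrix (Fin r) (Fin r) ℝ) (m : Fin r → ℝ) :
    Measurable fun x : Fin r → ℝ => (x - m) ⬝ᵥ M *ᵥ (x - m) := by
  simp only [dotProduct, mulVec]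
  refine Finset.measurable_sum _ fun i _ => Measurable.mul ?_ ?_
  · exact ((measurable_pi_apply i).sub measurable_const)
  · exact Finset.measurable_sum _ fun j _ =>
      measurable_const.mul ((measurable_pi_apply j).sub measurable_const)

lemma measurable_gd (m : Fin r → ℝ) (S : Matrix (Fin r) (Fin r) ℝ) :
    Measurable (gd m S) := by
  unfold gd
  exact (measurable_const.mul
    (((measurable_quadform S⁻¹ m).neg.div_const 2).exp))

lemma measurable_dot (w : Fin r → ℝ) : Measurable fun x : Fin r → ℝ => w ⬝ᵥ x := by
  simp only [dotProduct]
  exact Finset.measurable_sum _ fun i _ => measurable_const.mul (measurable_pi_apply i)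

/-! ### change of variables -/

lemma integral_comp_mulVec {B : Matrix (Fin r) (Fin r) ℝ} (hB : B.det ≠ 0)
    {h : (Fin r → ℝ) → ℝ} (hh : AEStronglyMeasurable h (volume : Measure (Fin r → ℝ))) :
    ∫ x, h x = |B.det| * ∫ y, h (B *ᵥ y) := by
  have hmeas : Measurable (toLin' B) :=
    Continuous.measurable (LinearMap.continuous_on_pi _)
  have hmap := Real.map_matrix_volume_pi_eq_smul_volume_pi hB
  have hh' : AEStronglyMeasurable h (Measure.map (toLin' B) volume) := by
    rw [hmap]; exact hh.mono_ac Measure.smul_absolutelyContinuous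
  have h1 : ∫ y, h (B *ᵥ y) = ∫ z, h z ∂(Measure.map (toLin' B) volume) := by
    rw [integral_map hmeas.aemeasurable hh']
    simp only [toLin'_apply]
  rw [h1, hmap, integral_smul_measure, ENNReal.toReal_ofReal (abs_nonneg _), smul_eq_mul,
    ← mul_assoc, abs_inv, mul_inv_cancel₀ (abs_ne_zero.mpr hB), one_mul]

lemma integrable_comp_mulVec {B : Matrix (Fin r) (Fin r) ℝ} (hB : B.det ≠ 0)
    {h : (Fin r → ℝ) → ℝ} (hh : AEStronglyMeasurable h (volume : Measure (Fin r → ℝ))) :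
    Integrable (fun y => h (B *ᵥ y)) ↔ Integrable h := by
  have hmeas : Measurable (toLin' B) :=
    Continuous.measurable (LinearMap.continuous_on_pi _)
  have hmap := Real.map_matrix_volume_pi_eq_smul_volume_pi hB
  have hh' : AEStronglyMeasurable h (Measure.map (toLin' B) volume) := by
    rw [hmap]; exact hh.mono_ac Measure.smul_absolutelyContinuous
  have h1 : Integrable (fun y => h (B *ᵥ y)) ↔ Integrable h (Measure.map (toLin' B) volume) := by
    rw [integrable_map_measure hh' hmeas.aemeasurable]
    simp only [Function.comp_def, toLin'_apply]
  have hc : ENNReal.ofReal |B.det⁻¹| ≠ 0 := by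
    simpa [ENNReal.ofReal_eq_zero, not_le, abs_pos] using inv_ne_zero hB
  rw [h1, hmap, integrable_smul_measure hc (by simp)]

/-! ### matrix square root facts -/

variable {S : Matrix (Fin r) (Fin r) ℝ}

lemma mulVec_dot (B : Matrix (Fin r) (Fin r) ℝ) (y z : Fin r → ℝ) :
    (B *ᵥ y) ⬝ᵥ z = y ⬝ᵥ (Bᵀ *ᵥ z) := by
  rw [dotProduct_comm, dotProduct_mulVec, dotProduct_comm, ← vecMul_transpose,
    transpose_transpose]

lemma sqrtm_transpose (hS : S.PosDef) : (CFC.sqrt S)ᵀ = (CFC.sqrt S) := by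
  have h := (CFC.sqrt_nonneg S).posSemidef.isHermitian
  rwa [IsHermitian, conjTranspose_eq_transpose_of_trivial] at h

lemma sqrtm_mul_self (hS : S.PosDef) : (CFC.sqrt S) * (CFC.sqrt S) = S :=
  CFC.sqrt_mul_sqrt_self S hS.posSemidef.nonneg

lemma sqrtm_det_mul_self (hS : S.PosDef) :
    (CFC.sqrt S).det * (CFC.sqrt S).det = S.det := by
  rw [← det_mul, sqrtm_mul_self hS]

lemma sqrtm_det_ne_zero (hS : S.PosDef) : (CFC.sqrt S).det ≠ 0 := by
  intro h
  have := sqrtm_det_mul_self hS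
  rw [h, mul_zero] at this
  exact hS.det_pos.ne' this.symm

lemma sqrtm_abs_det (hS : S.PosDef) : |(CFC.sqrt S).det| = Real.sqrt S.det := by
  rw [← sqrtm_det_mul_self hS, Real.sqrt_mul_self_eq_abs]

lemma sqrtm_inv_conj (hS : S.PosDef) :
    (CFC.sqrt S) * S⁻¹ * (CFC.sqrt S) = 1 := by
  set A := (CFC.sqrt S) with hA
  have hu : IsUnit A.det := isUnit_iff_ne_zero.mpr (sqrtm_det_ne_zero hS)
  rw [← sqrtm_mul_self hS, ← hA, Matrix.mul_inv_rev]
  calc A * (A⁻¹ * A⁻¹) * A = (A * A⁻¹) * (A⁻¹ * A) := by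
        simp only [Matrix.mul_assoc]
    _ = 1 := by rw [mul_nonsing_inv _ hu, nonsing_inv_mul _ hu, one_mul]

lemma quad_transform (hS : S.PosDef) (M : Matrix (Fin r) (Fin r) ℝ) (y : Fin r → ℝ) :
    ((CFC.sqrt S) *ᵥ y) ⬝ᵥ M *ᵥ ((CFC.sqrt S) *ᵥ y)
      = y ⬝ᵥ (((CFC.sqrt S) * M * (CFC.sqrt S)) *ᵥ y) := by
  rw [mulVec_mulVec, mulVec_dot, sqrtm_transpose hS, mulVec_mulVec, ← Matrix.mul_assoc]

lemma gd_comp_sqrtm (hS : S.PosDef) (y : Fin r → ℝ) :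
    gd 0 S ((CFC.sqrt S) *ᵥ y) = gc r S * Phi y := by
  unfold gd
  congr 1
  rw [sub_zero, quad_transform hS S⁻¹ y, sqrtm_inv_conj hS, one_mulVec]
  exact Phi_eq y

/-! ### Gaussian integrals for general PD matrices -/

lemma gauss_transfer (hS : S.PosDef) {g : (Fin r → ℝ) → ℝ}
    (hg : Measurable g) :
    ∫ x, gd 0 S x * g x
      = (Real.sqrt (2 * π) ^ r)⁻¹ * ∫ y, Phi y * g ((CFC.sqrt S) *ᵥ y) := by
  have hh : AEStronglyMeasurable (fun x => gd 0 S x * g x) (volume : Measure (Fin r → ℝ)) :=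
    ((measurable_gd 0 S).mul hg).aestronglyMeasurable
  rw [integral_comp_mulVec (sqrtm_det_ne_zero hS) hh]
  simp only [gd_comp_sqrtm hS]
  rw [show (fun y => gc r S * Phi y * g ((CFC.sqrt S) *ᵥ y))
      = fun y => gc r S * (Phi y * g ((CFC.sqrt S) *ᵥ y)) by funext y; ring]
  rw [integral_const_mul, ← mul_assoc, sqrtm_abs_det hS, gc_eq hS]
  have h1 : Real.sqrt S.det ≠ 0 := (Real.sqrt_pos.mpr hS.det_pos).ne'
  field_simp

lemma gauss_transfer_integrable (hS : S.PosDef) {g : (Fin r → ℝ) → ℝ}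
    (hg : Measurable g) :
    Integrable (fun x => gd 0 S x * g x) ↔
      Integrable (fun y => Phi y * g ((CFC.sqrt S) *ᵥ y)) := by
  have hh : AEStronglyMeasurable (fun x => gd 0 S x * g x) (volume : Measure (Fin r → ℝ)) :=
    ((measurable_gd 0 S).mul hg).aestronglyMeasurable
  rw [← integrable_comp_mulVec (sqrtm_det_ne_zero hS) hh]
  have hgc := (gc_pos hS).ne'
  have he : (fun y => gd 0 S ((CFC.sqrt S) *ᵥ y) * g ((CFC.sqrt S) *ᵥ y))
      = fun y => gc r S * (Phi y * g ((CFC.sqrt S) *ᵥ y)) := by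
    funext y; rw [gd_comp_sqrtm hS]; ring
  rw [he]
  constructor
  · intro h
    have h2 := h.const_mul (gc r S)⁻¹
    refine h2.congr ?_
    filter_upwards with y
    rw [← mul_assoc, inv_mul_cancel₀ hgc, one_mul]
  · intro h
    exact h.const_mul _

lemma integrable_gd (hS : S.PosDef) : Integrable (gd 0 S) := by
  have h := (gauss_transfer_integrable hS (g := fun _ => (1:ℝ)) measurable_const).mpr
    (by simpa using integrable_Phi)
  simpa using h

lemma integral_gd (hS : S.PosDef) : ∫ x, gd 0 S x = 1 := by
  have h := gauss_transfer hS (g := fun _ => (1:ℝ)) measurable_const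
  simp only [mul_one] at h
  rw [h, integral_Phi, inv_mul_cancel₀ sqrt_two_pi_pow_pos.ne']

/-- pointwise expansion of a quadratic form against `Phi` -/
lemma Phi_quad_expand (B : Matrix (Fin r) (Fin r) ℝ) (y : Fin r → ℝ) :
    Phi y * (y ⬝ᵥ B *ᵥ y) = ∑ i, ∑ j, B i j * (y i * y j * Phi y) := by
  simp only [dotProduct, mulVec, Finset.mul_sum]
  refine Finset.sum_congr rfl fun i _ => Finset.sum_congr rfl fun j _ => by ring

lemma integrable_gd_quad (hS : S.PosDef) (M : Matrix (Fin r) (Fin r) ℝ) :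
    Integrable (fun x => gd 0 S x * (x ⬝ᵥ M *ᵥ x)) := by
  have hg : Measurable fun x : Fin r → ℝ => x ⬝ᵥ M *ᵥ x := by
    have := measurable_quadform M 0
    simpa using this
  rw [gauss_transfer_integrable hS hg]
  set A := (CFC.sqrt S)
  have hexp : (fun y : Fin r → ℝ => Phi y * ((A *ᵥ y) ⬝ᵥ M *ᵥ (A *ᵥ y)))
      = fun y => ∑ i, ∑ j, (A * M * A) i j * (y i * y j * Phi y) := by
    funext y
    rw [quad_transform hS M y, Phi_quad_expand]
  rw [hexp]
  refine integrable_finset_sum _ fun i _ => integrable_finset_sum _ fun j _ => ?_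
  exact (integrable_mul2_Phi i j).const_mul _

lemma integral_gd_quad (hS : S.PosDef) (M : Matrix (Fin r) (Fin r) ℝ) :
    ∫ x, gd 0 S x * (x ⬝ᵥ M *ᵥ x) = Matrix.trace (M * S) := by
  have hg : Measurable fun x : Fin r → ℝ => x ⬝ᵥ M *ᵥ x := by
    have := measurable_quadform M 0
    simpa using this
  rw [gauss_transfer hS hg]
  set A := (CFC.sqrt S) with hA
  have hexp : (fun y : Fin r → ℝ => Phi y * ((A *ᵥ y) ⬝ᵥ M *ᵥ (A *ᵥ y)))
      = fun y => ∑ i, ∑ j, (A * M * A) i j * (y i * y j * Phi y) := by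
    funext y
    rw [quad_transform hS M y, Phi_quad_expand]
  rw [hexp, integral_finset_sum _ fun i _ =>
    (integrable_finset_sum _ fun j _ => (integrable_mul2_Phi i j).const_mul ((A * M * A) i j))]
  have h2 : ∀ i, ∫ y : Fin r → ℝ, ∑ j, (A * M * A) i j * (y i * y j * Phi y)
      = Real.sqrt (2 * π) ^ r * (A * M * A) i i := by
    intro i
    rw [integral_finset_sum _ fun j _ => (integrable_mul2_Phi i j).const_mul ((A * M * A) i j)]
    have h3 : ∀ j, ∫ y : Fin r → ℝ, (A * M * A) i j * (y i * y j * Phi y)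
        = (A * M * A) i j * (Real.sqrt (2 * π) ^ r * (1 : Matrix (Fin r) (Fin r) ℝ) i j) := by
      intro j
      rw [integral_const_mul, integral_mul2_Phi]
    simp only [h3, Matrix.one_apply, mul_ite, mul_one, mul_zero, Finset.sum_ite_eq,
      Finset.mem_univ, if_true]
    ring
  simp only [h2]
  rw [← Finset.mul_sum, ← mul_assoc, inv_mul_cancel₀ sqrt_two_pi_pow_pos.ne', one_mul]
  have : ∑ i, (A * M * A) i i = Matrix.trace (A * M * A) := rfl
  rw [this, Matrix.mul_assoc, Matrix.trace_mul_comm, Matrix.mul_assoc, sqrtm_mul_self hS]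

lemma integrable_gd_lin (hS : S.PosDef) (w : Fin r → ℝ) :
    Integrable (fun x => gd 0 S x * (w ⬝ᵥ x)) := by
  rw [gauss_transfer_integrable hS (measurable_dot w)]
  set A := (CFC.sqrt S)
  have hexp : (fun y : Fin r → ℝ => Phi y * (w ⬝ᵥ (A *ᵥ y)))
      = fun y => ∑ i, (w ᵥ* A) i * (y i * Phi y) := by
    funext y
    rw [dotProduct_mulVec]
    simp only [dotProduct, Finset.mul_sum]
    exact Finset.sum_congr rfl fun i _ => by ring
  rw [hexp]
  exact integrable_finset_sum _ fun i _ => (integrable_mul1_Phi i).const_mul _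

lemma integral_gd_lin (hS : S.PosDef) (w : Fin r → ℝ) :
    ∫ x, gd 0 S x * (w ⬝ᵥ x) = 0 := by
  rw [gauss_transfer hS (measurable_dot w)]
  set A := (CFC.sqrt S)
  have hexp : (fun y : Fin r → ℝ => Phi y * (w ⬝ᵥ (A *ᵥ y)))
      = fun y => ∑ i, (w ᵥ* A) i * (y i * Phi y) := by
    funext y
    rw [dotProduct_mulVec]
    simp only [dotProduct, Finset.mul_sum]
    exact Finset.sum_congr rfl fun i _ => by ring
  rw [hexp, integral_finset_sum _ fun i _ => (integrable_mul1_Phi i).const_mul _]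
  have hz : ∀ i, ∫ y : Fin r → ℝ, (w ᵥ* A) i * (y i * Phi y) = 0 := by
    intro i; rw [integral_const_mul, integral_mul1_Phi, mul_zero]
  simp [hz]


/-! ### mvGaussian basics -/

lemma mvGaussian_eq (m : Fin r → ℝ) (S : Matrix (Fin r) (Fin r) ℝ) :
    mvGaussian m S = volume.withDensity (fun x => ENNReal.ofReal (gd m S x)) := by
  unfold mvGaussian gd gc
  simp [Fintype.card_fin]

lemma gd_shift (m : Fin r → ℝ) (S : Matrix (Fin r) (Fin r) ℝ) (x : Fin r → ℝ) :
    gd m S x = gd 0 S (x - m) := by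
  unfold gd; simp

lemma integrable_gd' (hS : S.PosDef) (m : Fin r → ℝ) : Integrable (gd m S) := by
  have h := (integrable_gd hS).comp_sub_right m
  refine h.congr ?_
  filter_upwards with x
  rw [← gd_shift]

lemma integral_gd' (hS : S.PosDef) (m : Fin r → ℝ) : ∫ x, gd m S x = 1 := by
  simp_rw [gd_shift m S]
  rw [integral_sub_right_eq_self (gd 0 S) m]
  exact integral_gd hS

lemma isProb (hS : S.PosDef) (m : Fin r → ℝ) : IsProbabilityMeasure (mvGaussian m S) := by
  constructor
  rw [mvGaussian_eq, withDensity_apply _ MeasurableSet.univ, setLIntegral_univ,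
    ← ofReal_integral_eq_lintegral_ofReal (integrable_gd' hS m)
      (Filter.Eventually.of_forall fun x => (gd_pos hS m x).le),
    integral_gd' hS m, ENNReal.ofReal_one]

lemma integral_mvGaussian (hS : S.PosDef) (m : Fin r → ℝ) (g : (Fin r → ℝ) → ℝ) :
    ∫ x, g x ∂(mvGaussian m S) = ∫ x, gd m S x * g x := by
  rw [mvGaussian_eq]
  have hme : Measurable fun x => (gd m S x).toNNReal := (measurable_gd m S).real_toNNReal
  have heq : (fun x => ENNReal.ofReal (gd m S x))
      = fun x => ((gd m S x).toNNReal : ENNReal) := rfl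
  rw [heq, integral_withDensity_eq_integral_smul hme g]
  refine integral_congr_ae (Filter.Eventually.of_forall fun x => ?_)
  simp [NNReal.smul_def, Real.coe_toNNReal _ ((gd_pos hS m x).le)]

lemma integrable_mvGaussian_iff (hS : S.PosDef) (m : Fin r → ℝ) {g : (Fin r → ℝ) → ℝ} :
    Integrable g (mvGaussian m S) ↔ Integrable (fun x => gd m S x * g x) := by
  rw [mvGaussian_eq]
  have hme : Measurable fun x => (gd m S x).toNNReal := (measurable_gd m S).real_toNNReal
  have heq : (fun x => ENNReal.ofReal (gd m S x))
      = fun x => ((gd m S x).toNNReal : ENNReal) := rfl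
  rw [heq, integrable_withDensity_iff_integrable_smul hme]
  constructor <;> intro h <;> refine h.congr (Filter.Eventually.of_forall fun x => ?_) <;>
    simp [NNReal.smul_def, Real.coe_toNNReal _ ((gd_pos hS m x).le)]

/-! ### moments of centered Gaussian -/

lemma quad_expand (N : Matrix (Fin r) (Fin r) ℝ) (m x : Fin r → ℝ) :
    (x - m) ⬝ᵥ N *ᵥ (x - m)
      = x ⬝ᵥ N *ᵥ x - (N *ᵥ m) ⬝ᵥ x - (m ᵥ* N) ⬝ᵥ x + m ⬝ᵥ N *ᵥ m := by
  rw [mulVec_sub, dotProduct_sub, sub_dotProduct, sub_dotProduct]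
  rw [show x ⬝ᵥ N *ᵥ m = (N *ᵥ m) ⬝ᵥ x from dotProduct_comm _ _,
    show m ⬝ᵥ N *ᵥ x = (m ᵥ* N) ⬝ᵥ x from dotProduct_mulVec _ _ _]
  ring

lemma integrable_quadm_gd (hS : S.PosDef) (N : Matrix (Fin r) (Fin r) ℝ) (m : Fin r → ℝ) :
    Integrable (fun x => gd 0 S x * ((x - m) ⬝ᵥ N *ᵥ (x - m))) := by
  have he : (fun x => gd 0 S x * ((x - m) ⬝ᵥ N *ᵥ (x - m)))
      = fun x => gd 0 S x * (x ⬝ᵥ N *ᵥ x) - gd 0 S x * ((N *ᵥ m) ⬝ᵥ x)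
          - gd 0 S x * ((m ᵥ* N) ⬝ᵥ x) + gd 0 S x * (m ⬝ᵥ N *ᵥ m) := by
    funext x; rw [quad_expand]; ring
  rw [he]
  exact (((integrable_gd_quad hS N).sub (integrable_gd_lin hS _)).sub
    (integrable_gd_lin hS _)).add ((integrable_gd hS).mul_const _)

lemma integral_quadm_gd (hS : S.PosDef) (N : Matrix (Fin r) (Fin r) ℝ) (m : Fin r → ℝ) :
    ∫ x, gd 0 S x * ((x - m) ⬝ᵥ N *ᵥ (x - m)) = Matrix.trace (N * S) + m ⬝ᵥ N *ᵥ m := by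
  have he : (fun x => gd 0 S x * ((x - m) ⬝ᵥ N *ᵥ (x - m)))
      = fun x => gd 0 S x * (x ⬝ᵥ N *ᵥ x) - gd 0 S x * ((N *ᵥ m) ⬝ᵥ x)
          - gd 0 S x * ((m ᵥ* N) ⬝ᵥ x) + gd 0 S x * (m ⬝ᵥ N *ᵥ m) := by
    funext x; rw [quad_expand]; ring
  have i1 : Integrable (fun x => gd 0 S x * (x ⬝ᵥ N *ᵥ x) - gd 0 S x * ((N *ᵥ m) ⬝ᵥ x)) :=
    (integrable_gd_quad hS N).sub (integrable_gd_lin hS _)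
  have i2 : Integrable (fun x => gd 0 S x * (x ⬝ᵥ N *ᵥ x) - gd 0 S x * ((N *ᵥ m) ⬝ᵥ x)
      - gd 0 S x * ((m ᵥ* N) ⬝ᵥ x)) := i1.sub (integrable_gd_lin hS _)
  rw [he, integral_add i2 ((integrable_gd hS).mul_const _),
    integral_sub i1 (integrable_gd_lin hS _),
    integral_sub (integrable_gd_quad hS N) (integrable_gd_lin hS _),
    integral_gd_quad hS N, integral_gd_lin hS, integral_gd_lin hS,
    integral_mul_const, integral_gd hS]
  ring

/-! ### the KL divergence formula -/

lemma log_gd (hS : S.PosDef) (m : Fin r → ℝ) (x : Fin r → ℝ) :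
    Real.log (gd m S x) = Real.log (gc r S) - ((x - m) ⬝ᵥ S⁻¹ *ᵥ (x - m)) / 2 := by
  unfold gd
  rw [Real.log_mul (gc_pos hS).ne' (Real.exp_ne_zero _), Real.log_exp]
  ring

lemma log_gc (hS : S.PosDef) :
    Real.log (gc r S) = -(r * Real.log (2 * π) + Real.log S.det) / 2 := by
  unfold gc
  have hd := hS.det_pos
  rw [Real.log_inv, Real.log_sqrt (by positivity),
    Real.log_mul (by positivity) hd.ne', Real.log_pow]
  ring

lemma klDiv_mvGaussian (hS : S.PosDef) (m : Fin r → ℝ)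
    {C : Matrix (Fin r) (Fin r) ℝ} (hC : C.PosDef) :
    klDiv (mvGaussian 0 S) (mvGaussian m C)
      = (Real.log C.det - Real.log S.det
          + Matrix.trace (C⁻¹ * S) + m ⬝ᵥ C⁻¹ *ᵥ m - r) / 2 := by
  haveI hPν : IsProbabilityMeasure (mvGaussian m C) := isProb hC m
  haveI hPμ : IsProbabilityMeasure (mvGaussian 0 S) := isProb hS 0
  set μ := mvGaussian 0 S with hμdef
  set ν := mvGaussian m C with hνdef
  have hfm : Measurable fun x => ENNReal.ofReal (gd 0 S x) :=
    (measurable_gd _ _).ennreal_ofReal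
  have hgm : Measurable fun x => ENNReal.ofReal (gd m C x) :=
    (measurable_gd _ _).ennreal_ofReal
  have hratio : Measurable fun x => ENNReal.ofReal (gd 0 S x) / ENNReal.ofReal (gd m C x) :=
    hfm.div hgm
  have hμeq : μ = ν.withDensity
      (fun x => ENNReal.ofReal (gd 0 S x) / ENNReal.ofReal (gd m C x)) := by
    rw [hνdef, mvGaussian_eq m C, ← withDensity_mul _ hgm hratio, hμdef, mvGaussian_eq 0 S]
    congr 1
    funext x
    exact (ENNReal.mul_div_cancel'
      (by simp [ENNReal.ofReal_eq_zero, not_le, gd_pos hC m x])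
      (fun h => absurd h ENNReal.ofReal_ne_top)).symm
  have hrn : μ.rnDeriv ν =ᵐ[ν]
      fun x => ENNReal.ofReal (gd 0 S x) / ENNReal.ofReal (gd m C x) := by
    nth_rewrite 1 [hμeq]
    exact Measure.rnDeriv_withDensity ν hratio
  have hvolν : (volume : Measure (Fin r → ℝ)) ≪ ν := by
    rw [hνdef, mvGaussian_eq m C]
    exact withDensity_absolutelyContinuous' hgm.aemeasurable
      (Filter.Eventually.of_forall fun x => by
        simp [ENNReal.ofReal_eq_zero, not_le, gd_pos hC m x])
  have hμvol : μ ≪ (volume : Measure (Fin r → ℝ)) := by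
    rw [hμdef, mvGaussian_eq 0 S]
    exact withDensity_absolutelyContinuous _ _
  have hrnμ : μ.rnDeriv ν =ᵐ[μ]
      fun x => ENNReal.ofReal (gd 0 S x) / ENNReal.ofReal (gd m C x) :=
    hμvol.ae_eq (hvolν.ae_eq hrn)
  have hlog : (fun x => Real.log (μ.rnDeriv ν x).toReal)
      =ᵐ[μ] fun x => Real.log (gd 0 S x) - Real.log (gd m C x) := by
    filter_upwards [hrnμ] with x hx
    rw [hx, ENNReal.toReal_div, ENNReal.toReal_ofReal (gd_pos hS 0 x).le,
      ENNReal.toReal_ofReal (gd_pos hC m x).le,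
      Real.log_div (gd_pos hS 0 x).ne' (gd_pos hC m x).ne']
  have hkl : klDiv μ ν = ∫ x, (Real.log (gd 0 S x) - Real.log (gd m C x)) ∂μ := by
    unfold klDiv
    exact integral_congr_ae hlog
  -- rewrite integrand via log_gd
  have hintgd : (fun x => Real.log (gd 0 S x) - Real.log (gd m C x))
      = fun x => (Real.log (gc r S) - Real.log (gc r C))
          + (((x - m) ⬝ᵥ C⁻¹ *ᵥ (x - m)) / 2 - ((x - 0) ⬝ᵥ S⁻¹ *ᵥ (x - 0)) / 2) := by
    funext x
    rw [log_gd hS, log_gd hC]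
    ring
  rw [hkl, hintgd]
  -- integrability of the two quadratic pieces under μ
  have iQS : Integrable (fun x => (x - 0) ⬝ᵥ S⁻¹ *ᵥ (x - 0)) μ := by
    rw [hμdef, integrable_mvGaussian_iff hS 0]
    exact integrable_quadm_gd hS S⁻¹ 0
  have iQC : Integrable (fun x => (x - m) ⬝ᵥ C⁻¹ *ᵥ (x - m)) μ := by
    rw [hμdef, integrable_mvGaussian_iff hS 0]
    exact integrable_quadm_gd hS C⁻¹ m
  have vQS : ∫ x, (x - 0) ⬝ᵥ S⁻¹ *ᵥ (x - 0) ∂μ = (r : ℝ) := by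
    rw [hμdef, integral_mvGaussian hS 0, integral_quadm_gd hS S⁻¹ 0,
      nonsing_inv_mul S (isUnit_iff_ne_zero.mpr hS.det_pos.ne')]
    simp [Matrix.trace_one]
  have vQC : ∫ x, (x - m) ⬝ᵥ C⁻¹ *ᵥ (x - m) ∂μ
      = Matrix.trace (C⁻¹ * S) + m ⬝ᵥ C⁻¹ *ᵥ m := by
    rw [hμdef, integral_mvGaussian hS 0, integral_quadm_gd hS C⁻¹ m]
  have iQC2 : Integrable (fun x => ((x - m) ⬝ᵥ C⁻¹ *ᵥ (x - m)) / 2) μ := iQC.div_const 2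
  have iQS2 : Integrable (fun x => ((x - 0) ⬝ᵥ S⁻¹ *ᵥ (x - 0)) / 2) μ := iQS.div_const 2
  have iBig : Integrable (fun x => ((x - m) ⬝ᵥ C⁻¹ *ᵥ (x - m)) / 2
      - ((x - 0) ⬝ᵥ S⁻¹ *ᵥ (x - 0)) / 2) μ := iQC2.sub iQS2
  rw [integral_add (integrable_const _) iBig,
    integral_const, integral_sub iQC2 iQS2,
    integral_div, integral_div, vQS, vQC, probReal_univ]
  rw [log_gc hS, log_gc hC]
  simp only [ENNReal.toReal_one, smul_eq_mul, one_mul]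
  ring


lemma one_le_log_add_inv {t : ℝ} (ht : 0 < t) : 1 ≤ Real.log t + t⁻¹ := by
  have h := Real.log_le_sub_one_of_pos (inv_pos.mpr ht)
  rw [Real.log_inv] at h
  linarith

lemma one_lt_log_add_inv {t : ℝ} (ht : 0 < t) (ht1 : t ≠ 1) : 1 < Real.log t + t⁻¹ := by
  have h := Real.log_lt_sub_one_of_pos (inv_pos.mpr ht) (by
    simpa [inv_eq_one] using ht1)
  rw [Real.log_inv] at h
  linarith

section spectral

variable {C : Matrix (Fin r) (Fin r) ℝ}

lemma C_inv_eq (hC : C.PosDef) :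
    C⁻¹ = (hC.isHermitian.eigenvectorUnitary : Matrix (Fin r) (Fin r) ℝ)
        * Matrix.diagonal (fun i => (hC.isHermitian.eigenvalues i)⁻¹)
        * star (hC.isHermitian.eigenvectorUnitary : Matrix (Fin r) (Fin r) ℝ) := by
  set U := (hC.isHermitian.eigenvectorUnitary : Matrix (Fin r) (Fin r) ℝ)
  have hU1 : U * star U = 1 := Matrix.mem_unitaryGroup_iff.mp hC.isHermitian.eigenvectorUnitary.2
  have hU2 : star U * U = 1 := Matrix.mem_unitaryGroup_iff'.mp hC.isHermitian.eigenvectorUnitary.2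
  apply Matrix.inv_eq_right_inv
  nth_rewrite 1 [hC.isHermitian.spectral_theorem]
  have hdiag : Matrix.diagonal (RCLike.ofReal ∘ hC.isHermitian.eigenvalues)
      * Matrix.diagonal (fun i => (hC.isHermitian.eigenvalues i)⁻¹) = (1 : Matrix (Fin r) (Fin r) ℝ) := by
    rw [diagonal_mul_diagonal]
    have hfun : (fun i => (RCLike.ofReal ∘ hC.isHermitian.eigenvalues) i
        * (hC.isHermitian.eigenvalues i)⁻¹) = fun _ => (1:ℝ) := by
      funext i
      simp [Function.comp_apply, RCLike.ofReal_real_eq_id,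
        mul_inv_cancel₀ (hC.eigenvalues_pos i).ne']
    rw [hfun]
    exact diagonal_one
  calc U * Matrix.diagonal (RCLike.ofReal ∘ hC.isHermitian.eigenvalues) * star U
        * (U * Matrix.diagonal (fun i => (hC.isHermitian.eigenvalues i)⁻¹) * star U)
      = U * Matrix.diagonal (RCLike.ofReal ∘ hC.isHermitian.eigenvalues) * (star U * U)
        * Matrix.diagonal (fun i => (hC.isHermitian.eigenvalues i)⁻¹) * star U := by
        simp only [Matrix.mul_assoc]
    _ = U * (Matrix.diagonal (RCLike.ofReal ∘ hC.isHermitian.eigenvalues)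
        * Matrix.diagonal (fun i => (hC.isHermitian.eigenvalues i)⁻¹)) * star U := by
        rw [hU2]; simp only [Matrix.mul_one, Matrix.mul_assoc]
    _ = 1 := by rw [hdiag, Matrix.mul_one, hU1]

lemma trace_C_inv (hC : C.PosDef) :
    Matrix.trace C⁻¹ = ∑ i, (hC.isHermitian.eigenvalues i)⁻¹ := by
  rw [C_inv_eq hC]
  set U := (hC.isHermitian.eigenvectorUnitary : Matrix (Fin r) (Fin r) ℝ)
  have hU2 : star U * U = 1 := Matrix.mem_unitaryGroup_iff'.mp hC.isHermitian.eigenvectorUnitary.2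
  rw [Matrix.trace_mul_cycle, hU2, Matrix.one_mul, Matrix.trace_diagonal]

lemma log_det_C (hC : C.PosDef) :
    Real.log C.det = ∑ i, Real.log (hC.isHermitian.eigenvalues i) := by
  have hdet : C.det = ∏ i, hC.isHermitian.eigenvalues i := by
    simpa [RCLike.ofReal_real_eq_id] using hC.isHermitian.det_eq_prod_eigenvalues
  rw [hdet, Real.log_prod (fun i _ => (hC.eigenvalues_pos i).ne')]

lemma eigen_one_imp (hC : C.PosDef) (h : ∀ i, hC.isHermitian.eigenvalues i = 1) : C = 1 := by
  set U := (hC.isHermitian.eigenvectorUnitary : Matrix (Fin r) (Fin r) ℝ)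
  have hU1 : U * star U = 1 := Matrix.mem_unitaryGroup_iff.mp hC.isHermitian.eigenvectorUnitary.2
  have hd : Matrix.diagonal (RCLike.ofReal ∘ hC.isHermitian.eigenvalues)
      = (1 : Matrix (Fin r) (Fin r) ℝ) := by
    have hfun : (RCLike.ofReal ∘ hC.isHermitian.eigenvalues) = fun _ => (1:ℝ) := by
      funext i; simp [Function.comp_apply, h i, RCLike.ofReal_real_eq_id]
    rw [hfun]
    exact diagonal_one
  calc C = U * Matrix.diagonal (RCLike.ofReal ∘ hC.isHermitian.eigenvalues) * star U :=
        hC.isHermitian.spectral_theorem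
    _ = 1 := by rw [hd, Matrix.mul_one, hU1]

/-- the key analytic inequality -/
lemma key_ineq (hC : C.PosDef) (m : Fin r → ℝ) :
    0 ≤ Real.log C.det + Matrix.trace C⁻¹ + m ⬝ᵥ C⁻¹ *ᵥ m - r ∧
      (Real.log C.det + Matrix.trace C⁻¹ + m ⬝ᵥ C⁻¹ *ᵥ m - r = 0 ↔ m = 0 ∧ C = 1) := by
  have hq : 0 ≤ m ⬝ᵥ C⁻¹ *ᵥ m := by
    rcases eq_or_ne m 0 with hm | hm
    · simp [hm]
    · have := hC.inv.dotProduct_mulVec_pos hm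
      simpa [star_trivial] using this.le
  have hterm : ∀ i : Fin r, 0 ≤ Real.log (hC.isHermitian.eigenvalues i)
      + (hC.isHermitian.eigenvalues i)⁻¹ - 1 := fun i => by
    have := one_le_log_add_inv (hC.eigenvalues_pos i)
    linarith
  have hsum : Real.log C.det + Matrix.trace C⁻¹ - r
      = ∑ i : Fin r, (Real.log (hC.isHermitian.eigenvalues i)
          + (hC.isHermitian.eigenvalues i)⁻¹ - 1) := by
    rw [log_det_C hC, trace_C_inv hC]
    simp [Finset.sum_add_distrib, Finset.sum_sub_distrib]
  have hsum_nonneg : 0 ≤ Real.log C.det + Matrix.trace C⁻¹ - r := by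
    rw [hsum]
    exact Finset.sum_nonneg fun i _ => hterm i
  constructor
  · linarith
  constructor
  · intro h0
    have hq0 : m ⬝ᵥ C⁻¹ *ᵥ m = 0 := by linarith
    have hdet0 : Real.log C.det + Matrix.trace C⁻¹ - r = 0 := by linarith
    have hm : m = 0 := by
      by_contra hm
      have h2 : 0 < m ⬝ᵥ C⁻¹ *ᵥ m := by simpa [star_trivial] using hC.inv.dotProduct_mulVec_pos hm
      linarith
    refine ⟨hm, ?_⟩
    have heach : ∀ i ∈ Finset.univ, Real.log (hC.isHermitian.eigenvalues i)
        + (hC.isHermitian.eigenvalues i)⁻¹ - 1 = 0 := by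
      rw [hsum] at hdet0
      exact (Finset.sum_eq_zero_iff_of_nonneg fun i _ => hterm i).mp hdet0
    refine eigen_one_imp hC fun i => ?_
    by_contra h1
    have := one_lt_log_add_inv (hC.eigenvalues_pos i) h1
    have h2 := heach i (Finset.mem_univ i)
    linarith
  · rintro ⟨hm, hC1⟩
    subst hm; subst hC1
    simp [Matrix.trace_one]

end spectral


end Stmt11

open Stmt11 in
/-- if a measurable family `Σ(q)` of symmetric positive definite matrices
has identity mean and integrable log-determinant, then the standard Gaussian `N(0, I)`
is the unique Gaussian minimizing the `π`-averaged Kullback–Leibler divergence from the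
conditional priors `N(0, Σ(q))`. -/
theorem stmt_11 {r : ℕ} (hr : 1 ≤ r) {Q : Type*} [MeasurableSpace Q]
    (π : Measure Q) [IsProbabilityMeasure π]
    (S : Q → Matrix (Fin r) (Fin r) ℝ) (hSpd : ∀ q, (S q).PosDef)
    (hSmeas : ∀ i j, Measurable fun q => S q i j)
    (hSint : ∀ i j, Integrable (fun q => S q i j) π)
    (hSavg : ∀ i j, ∫ q, S q i j ∂π = (1 : Matrix (Fin r) (Fin r) ℝ) i j)
    (hlogdet : Integrable (fun q => Real.log (S q).det) π) :
    ∀ (m : Fin r → ℝ) (C : Matrix (Fin r) (Fin r) ℝ), C.PosDef →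
      (∫ q, klDiv (mvGaussian 0 (S q)) (mvGaussian 0 1) ∂π ≤
        ∫ q, klDiv (mvGaussian 0 (S q)) (mvGaussian m C) ∂π) ∧
      (∫ q, klDiv (mvGaussian 0 (S q)) (mvGaussian m C) ∂π =
          ∫ q, klDiv (mvGaussian 0 (S q)) (mvGaussian 0 1) ∂π ↔
        m = 0 ∧ C = 1) := by
  intro m C hC
  -- pointwise formulas
  have hf : ∀ q, klDiv (mvGaussian 0 (S q)) (mvGaussian m C)
      = (Real.log C.det - Real.log (S q).det
          + Matrix.trace (C⁻¹ * S q) + m ⬝ᵥ C⁻¹ *ᵥ m - r) / 2 :=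
    fun q => klDiv_mvGaussian (hSpd q) m hC
  have hg : ∀ q, klDiv (mvGaussian 0 (S q)) (mvGaussian 0 1)
      = (- Real.log (S q).det + Matrix.trace (S q) - r) / 2 := by
    intro q
    have h := klDiv_mvGaussian (hSpd q) 0 (Matrix.PosDef.one (n := Fin r) (R := ℝ))
    simpa using h
  -- integrability in q
  have hTr : Integrable (fun q => Matrix.trace (S q)) π := by
    have he : (fun q => Matrix.trace (S q)) = fun q => ∑ i, S q i i := by
      funext q; rfl
    rw [he]
    exact integrable_finset_sum _ fun i _ => hSint i i
  have hTrC : Integrable (fun q => Matrix.trace (C⁻¹ * S q)) π := by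
    have he : (fun q => Matrix.trace (C⁻¹ * S q))
        = fun q => ∑ i, ∑ j, C⁻¹ i j * S q j i := by
      funext q
      simp [Matrix.trace, Matrix.diag, Matrix.mul_apply]
    rw [he]
    exact integrable_finset_sum _ fun i _ =>
      integrable_finset_sum _ fun j _ => (hSint j i).const_mul _
  -- averaged traces
  have vTr : ∫ q, Matrix.trace (S q) ∂π = (r : ℝ) := by
    have he : (fun q => Matrix.trace (S q)) = fun q => ∑ i, S q i i := by
      funext q; rfl
    rw [he, integral_finset_sum _ fun i _ => hSint i i]
    simp only [hSavg]
    simp [Matrix.one_apply]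
  have vTrC : ∫ q, Matrix.trace (C⁻¹ * S q) ∂π = Matrix.trace C⁻¹ := by
    have he : (fun q => Matrix.trace (C⁻¹ * S q))
        = fun q => ∑ i, ∑ j, C⁻¹ i j * S q j i := by
      funext q
      simp [Matrix.trace, Matrix.diag, Matrix.mul_apply]
    rw [he, integral_finset_sum _ fun i _ =>
      integrable_finset_sum _ fun j _ => (hSint j i).const_mul (C⁻¹ i j)]
    have hin : ∀ i : Fin r, ∫ q, ∑ j, C⁻¹ i j * S q j i ∂π = C⁻¹ i i := by
      intro i
      rw [integral_finset_sum _ fun j _ => (hSint j i).const_mul (C⁻¹ i j)]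
      have : ∀ j, ∫ q, C⁻¹ i j * S q j i ∂π
          = C⁻¹ i j * (1 : Matrix (Fin r) (Fin r) ℝ) j i := by
        intro j
        rw [integral_const_mul, hSavg]
      simp only [this, Matrix.one_apply, mul_ite, mul_one, mul_zero]
      simp
    simp only [hin]
    rfl
  -- integrability of the two kl functions
  have hIg : Integrable (fun q => klDiv (mvGaussian 0 (S q)) (mvGaussian 0 1)) π := by
    have hb : Integrable (fun q =>
        (- Real.log (S q).det + Matrix.trace (S q) - r) / 2) π :=
      ((hlogdet.neg.add hTr).sub (integrable_const _)).div_const 2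
    exact hb.congr (Filter.Eventually.of_forall fun q => (hg q).symm)
  have hD : Integrable (fun q =>
      (Real.log C.det + Matrix.trace (C⁻¹ * S q) - Matrix.trace (S q)
        + m ⬝ᵥ C⁻¹ *ᵥ m) / 2) π :=
    ((((integrable_const _).add hTrC).sub hTr).add (integrable_const _)).div_const 2
  -- the big splitting:  f = g + D pointwise
  have hsplit : ∀ q, klDiv (mvGaussian 0 (S q)) (mvGaussian m C)
      = klDiv (mvGaussian 0 (S q)) (mvGaussian 0 1)
        + (Real.log C.det + Matrix.trace (C⁻¹ * S q) - Matrix.trace (S q)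
            + m ⬝ᵥ C⁻¹ *ᵥ m) / 2 := by
    intro q
    rw [hf q, hg q]
    ring
  have hintf : ∫ q, klDiv (mvGaussian 0 (S q)) (mvGaussian m C) ∂π
      = ∫ q, klDiv (mvGaussian 0 (S q)) (mvGaussian 0 1) ∂π
        + (Real.log C.det + Matrix.trace C⁻¹ - r + m ⬝ᵥ C⁻¹ *ᵥ m) / 2 := by
    have h1 : ∫ q, klDiv (mvGaussian 0 (S q)) (mvGaussian m C) ∂π
        = ∫ q, (klDiv (mvGaussian 0 (S q)) (mvGaussian 0 1)
            + (Real.log C.det + Matrix.trace (C⁻¹ * S q) - Matrix.trace (S q)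
                + m ⬝ᵥ C⁻¹ *ᵥ m) / 2) ∂π := by
      exact integral_congr_ae (Filter.Eventually.of_forall fun q => hsplit q)
    rw [h1, integral_add hIg hD]
    congr 1
    have h2 : (fun q => (Real.log C.det + Matrix.trace (C⁻¹ * S q) - Matrix.trace (S q)
        + m ⬝ᵥ C⁻¹ *ᵥ m) / 2)
        = fun q => ((Real.log C.det + m ⬝ᵥ C⁻¹ *ᵥ m)
            + (Matrix.trace (C⁻¹ * S q) - Matrix.trace (S q))) / 2 := by
      funext q; ring
    rw [h2]
    have h3 : Integrable (fun q => Matrix.trace (C⁻¹ * S q) - Matrix.trace (S q)) π :=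
      hTrC.sub hTr
    have h4 : (fun q => ((Real.log C.det + m ⬝ᵥ C⁻¹ *ᵥ m)
        + (Matrix.trace (C⁻¹ * S q) - Matrix.trace (S q))) / 2)
        = fun q => ((Real.log C.det + m ⬝ᵥ C⁻¹ *ᵥ m)
            + (Matrix.trace (C⁻¹ * S q) - Matrix.trace (S q))) / 2 := rfl
    rw [integral_div, integral_add (integrable_const _) h3, integral_const,
      integral_sub hTrC hTr, vTrC, vTr, probReal_univ]
    simp only [ENNReal.toReal_one, smul_eq_mul, one_mul]
    ring
  obtain ⟨hge, hiff⟩ := key_ineq hC m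
  constructor
  · rw [hintf]; linarith
  · rw [hintf]
    constructor
    · intro h
      apply hiff.mp
      have : (Real.log C.det + Matrix.trace C⁻¹ - r + m ⬝ᵥ C⁻¹ *ᵥ m) / 2 = 0 := by linarith
      linarith
    · rintro ⟨hm, hC1⟩
      have : Real.log C.det + Matrix.trace C⁻¹ + m ⬝ᵥ C⁻¹ *ᵥ m - r = 0 :=
        hiff.mpr ⟨hm, hC1⟩
      have h2 : (Real.log C.det + Matrix.trace C⁻¹ - r + m ⬝ᵥ C⁻¹ *ᵥ m) / 2 = 0 := by
        linarith
      rw [h2, add_zero]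
end

section
/- Let d ≥ 1, A > 0, l > 0, and let x_1, …, x_n be pairwise distinct points in ℝ^d. Then the n × n matrix M with entries M_{ij} = A · exp(−‖x_i − x_j‖² / (2 l²)) is symmetric positive definite: for every nonzero c ∈ ℝ^n, ∑_{i,j} c_i c_j M_{ij} > 0. -/
open Finset in
lemma gauss_aux {d n : ℕ} (hd : 1 ≤ d) (s : ℝ) (hs : 0 < s)
    (y : Fin n → Fin d → ℝ) (hy : Function.Injective y)
    (e : Fin n → ℝ) (he : e ≠ 0) :
    0 < ∑ i, ∑ j, e i * e j * Real.exp (s * ∑ a, y i a * y j a) := by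
  classical
  set t : Fin n → Fin n → ℝ := fun i j => ∑ a, y i a * y j a with ht
  set E : ∀ m : ℕ, (Fin m → Fin d) → ℝ := fun m k => ∑ i, e i * ∏ u, y i (k u) with hE
  set S : ℕ → ℝ := fun m => ∑ k : Fin m → Fin d, (E m k) ^ 2 with hS
  have hSm : ∀ m, S m = ∑ i, ∑ j, e i * e j * (t i j) ^ m := by
    intro m
    calc ∑ k : Fin m → Fin d, (∑ i, e i * ∏ u, y i (k u)) ^ 2
        = ∑ k : Fin m → Fin d, ∑ i, ∑ j,
            (e i * e j) * ((∏ u, y i (k u)) * ∏ u, y j (k u)) := by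
          refine sum_congr rfl fun k _ => ?_
          rw [sq, Finset.sum_mul_sum]
          exact sum_congr rfl fun i _ => sum_congr rfl fun j _ => by ring
      _ = ∑ i, ∑ j, ∑ k : Fin m → Fin d,
            (e i * e j) * ((∏ u, y i (k u)) * ∏ u, y j (k u)) := by
          rw [Finset.sum_comm]
          exact sum_congr rfl fun i _ => Finset.sum_comm
      _ = ∑ i, ∑ j, e i * e j * (t i j) ^ m := by
          refine sum_congr rfl fun i _ => sum_congr rfl fun j _ => ?_
          rw [ht, Fintype.sum_pow, Finset.mul_sum]
          exact sum_congr rfl fun k _ => by rw [Finset.prod_mul_distrib]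
  have hS0 : ∀ m, 0 ≤ S m := fun m => Finset.sum_nonneg fun _ _ => sq_nonneg _
  -- the exponential as a series
  have hexp : ∀ r : ℝ, Real.exp r = ∑' m : ℕ, r ^ m / m.factorial := by
    intro r
    rw [Real.exp_eq_exp_ℝ, NormedSpace.exp_eq_tsum_div]
  set g : ℕ → ℝ := fun m => ∑ i, ∑ j, e i * e j * ((s * t i j) ^ m / m.factorial) with hg
  have hgsum : Summable g := by
    refine summable_sum fun i _ => summable_sum fun j _ => ?_
    exact (Real.summable_pow_div_factorial (s * t i j)).mul_left _
  have hQ : (∑ i, ∑ j, e i * e j * Real.exp (s * t i j)) = ∑' m, g m := by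
    rw [Summable.tsum_finsetSum (fun i _ => summable_sum fun j _ =>
      (Real.summable_pow_div_factorial (s * t i j)).mul_left _)]
    refine sum_congr rfl fun i _ => ?_
    rw [Summable.tsum_finsetSum (fun j _ =>
      (Real.summable_pow_div_factorial (s * t i j)).mul_left _)]
    refine sum_congr rfl fun j _ => ?_
    rw [hexp, ← tsum_mul_left]
  have hgS : ∀ m, g m = s ^ m / m.factorial * S m := by
    intro m
    rw [hSm, Finset.mul_sum]
    refine sum_congr rfl fun i _ => ?_
    rw [Finset.mul_sum]
    refine sum_congr rfl fun j _ => ?_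
    rw [mul_pow]
    ring
  have hg0 : ∀ m, 0 ≤ g m := by
    intro m
    rw [hgS]
    exact mul_nonneg (div_nonneg (pow_nonneg hs.le m) (Nat.cast_nonneg _)) (hS0 m)
  -- strictness: some S m is positive
  have hex : ∃ m, 0 < S m := by
    by_contra hcon
    push_neg at hcon
    have hSz : ∀ m, S m = 0 := fun m => le_antisymm (hcon m) (hS0 m)
    have hEz : ∀ (m : ℕ) (k : Fin m → Fin d), E m k = 0 := by
      intro m k
      have := hSz m
      rw [hS] at this
      have h0 := (Finset.sum_eq_zero_iff_of_nonneg (fun _ _ => sq_nonneg _)).mp this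
      have := h0 k (Finset.mem_univ _)
      exact pow_eq_zero_iff two_ne_zero |>.mp this
    -- monomial vanishing over arbitrary finsets
    have hmono : ∀ (U : Finset (Fin n)) (a : Fin n → Fin d),
        ∑ i, e i * ∏ j ∈ U, y i (a j) = 0 := by
      intro U a
      have h := hEz U.card (fun u => a (U.equivFin.symm u))
      rw [hE] at h
      rw [← h]
      refine sum_congr rfl fun i _ => ?_
      congr 1
      rw [← Finset.prod_coe_sort U (fun j => y i (a j))]
      exact (Equiv.prod_comp U.equivFin.symm (fun u : U => y i (a u))).symm
    -- separation
    obtain ⟨i₀, hi₀⟩ := Function.ne_iff.mp he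
    have hsep : ∀ j : Fin n, j ≠ i₀ → ∃ b : Fin d, y i₀ b ≠ y j b := by
      intro j hj
      have : y i₀ ≠ y j := fun h => hj (hy h).symm
      exact Function.ne_iff.mp this
    choose a ha using fun (j : Fin n) => fun (hj : j ≠ i₀) => hsep j hj
    set b : Fin n → Fin d := fun j => if hj : j ≠ i₀ then a j hj else ⟨0, hd⟩ with hb
    set T : Finset (Fin n) := Finset.univ.erase i₀ with hT
    set P : Fin n → ℝ := fun i => ∏ j ∈ T, (y i (b j) - y j (b j)) with hP
    have hzero : ∑ i, e i * P i = 0 := by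
      have expand : ∀ i, P i = ∑ U ∈ T.powerset,
          (∏ j ∈ U, y i (b j)) * ∏ j ∈ T \ U, (-(y j (b j))) := by
        intro i
        rw [hP]
        simp only [sub_eq_add_neg]
        exact Finset.prod_add _ _ T
      calc ∑ i, e i * P i
          = ∑ U ∈ T.powerset, (∏ j ∈ T \ U, (-(y j (b j)))) *
              ∑ i, e i * ∏ j ∈ U, y i (b j) := by
            simp_rw [expand, Finset.mul_sum]
            rw [Finset.sum_comm]
            refine sum_congr rfl fun U _ => ?_
            exact sum_congr rfl fun i _ => by ring
        _ = 0 := by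
            refine Finset.sum_eq_zero fun U _ => ?_
            rw [hmono U b, mul_zero]
    have hsingle : ∑ i, e i * P i = e i₀ * P i₀ := by
      refine Finset.sum_eq_single i₀ (fun i _ hi => ?_) (fun h => absurd (mem_univ i₀) h)
      have : P i = 0 := by
        refine Finset.prod_eq_zero (Finset.mem_erase.mpr ⟨hi, Finset.mem_univ i⟩) ?_
        exact sub_self _
      rw [this, mul_zero]
    have hPne : P i₀ ≠ 0 := by
      rw [hP]
      refine Finset.prod_ne_zero_iff.mpr fun j hj => ?_
      have hji : j ≠ i₀ := (Finset.mem_erase.mp hj).1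
      have : b j = a j hji := by rw [hb]; simp [hji]
      rw [this]
      exact sub_ne_zero.mpr (ha j hji)
    have : e i₀ = 0 := by
      have := hzero.symm.trans hsingle
      exact (mul_eq_zero.mp this.symm).resolve_right hPne
    exact hi₀ this
  obtain ⟨m₀, hm₀⟩ := hex
  have h1 : g m₀ ≤ ∑' m, g m := Summable.le_tsum hgsum m₀ fun m _ => hg0 m
  have h2 : 0 < g m₀ := by
    rw [hgS]
    exact mul_pos (div_pos (pow_pos hs m₀) (by positivity)) hm₀
  calc (0:ℝ) < g m₀ := h2
    _ ≤ ∑' m, g m := h1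
    _ = ∑ i, ∑ j, e i * e j * Real.exp (s * t i j) := hQ.symm

open Matrix

/-- the squared exponential (Gaussian) kernel matrix
`M_{ij} = A exp(−‖x_i − x_j‖²/(2 l²))` at pairwise distinct points of `ℝ^d`
is symmetric positive definite: `∑_{i,j} c_i c_j M_{ij} > 0` for every nonzero `c`. -/
theorem stmt_15 {d n : ℕ} (hd : 1 ≤ d) (A l : ℝ) (hA : 0 < A) (hl : 0 < l)
    (x : Fin n → EuclideanSpace ℝ (Fin d)) (hx : Function.Injective x)
    (M : Matrix (Fin n) (Fin n) ℝ)
    (hM : ∀ i j, M i j = A * Real.exp (-‖x i - x j‖ ^ 2 / (2 * l ^ 2))) :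
    M.PosDef ∧ ∀ c : Fin n → ℝ, c ≠ 0 → 0 < ∑ i, ∑ j, c i * c j * M i j := by

  classical
  set w : Fin n → ℝ := fun i => Real.exp (-‖x i‖ ^ 2 / (2 * l ^ 2)) with hw
  have hl2 : (0:ℝ) < l ^ 2 := by positivity
  have key : ∀ i j, M i j =
      A * (w i * w j * Real.exp ((1 / l ^ 2) * ∑ a, x i a * x j a)) := by
    intro i j
    rw [hM, hw]
    congr 1
    rw [← Real.exp_add, ← Real.exp_add]
    congr 1
    have hinner : (inner ℝ (x i) (x j) : ℝ) = ∑ a, x i a * x j a := by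
      simp [PiLp.inner_apply, RCLike.inner_apply, mul_comm]
    have hns := norm_sub_sq_real (x i) (x j)
    rw [hinner] at hns
    rw [hns]
    field_simp
    ring
  have quad : ∀ c : Fin n → ℝ, c ≠ 0 → 0 < ∑ i, ∑ j, c i * c j * M i j := by
    intro c hc
    have he : (fun i => c i * w i) ≠ 0 := by
      intro h
      apply hc
      funext i
      have := congrFun h i
      have hwpos : 0 < w i := Real.exp_pos _
      simp only [Pi.zero_apply] at this ⊢
      exact (mul_eq_zero.mp this).resolve_right hwpos.ne'
    have hy : Function.Injective (fun i => (x i : Fin d → ℝ)) := fun i j h => hx (WithLp.ofLp_injective 2 h)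
    have hpos := gauss_aux hd (1 / l ^ 2) (by positivity)
      (fun i => (x i : Fin d → ℝ)) hy (fun i => c i * w i) he
    have heq : ∑ i, ∑ j, c i * c j * M i j =
        A * ∑ i, ∑ j, (c i * w i) * (c j * w j) *
          Real.exp ((1 / l ^ 2) * ∑ a, x i a * x j a) := by
      rw [Finset.mul_sum]
      refine Finset.sum_congr rfl fun i _ => ?_
      rw [Finset.mul_sum]
      refine Finset.sum_congr rfl fun j _ => ?_
      rw [key i j]
      ring
    rw [heq]
    exact mul_pos hA hpos
  refine ⟨posDef_iff_dotProduct_mulVec.mpr ⟨?_, ?_⟩, quad⟩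
  · ext i j
    simp only [conjTranspose_apply, star_trivial, hM, norm_sub_rev]
  · intro v hv
    have := quad v hv
    have hdp : star v ⬝ᵥ M *ᵥ v = ∑ i, ∑ j, v i * v j * M i j := by
      simp only [dotProduct, mulVec, dotProduct, star_trivial, Pi.star_apply, Finset.mul_sum]
      exact Finset.sum_congr rfl fun i _ => Finset.sum_congr rfl fun j _ => by ring
    rw [hdp]
    exact this
end

section
/- Let H be a real separable Hilbert space and T : H → H a bounded self-adjoint linear operator with ⟨T x, x⟩ ≥ 0 for all x ∈ H. Suppose (e_i)_{i ∈ ℕ} is a Hilbert basis of H consisting of eigenvectors of T, T e_i = λ_i e_i, with nonnegative eigenvalues arranged in decreasing order: λ_0 ≥ λ_1 ≥ λ_2 ≥ … ≥ 0. Then for every r ∈ ℕ and every orthonormal family v_0, …, v_{r−1} in H, ∑_{i < r} ⟨T v_i, v_i⟩ ≤ ∑_{i < r} λ_i. Consequently, the span of the r dominant eigenvectors maximizes the captured variance ∑_{i<r} ⟨T v_i, v_i⟩ over all r-dimensional orthonormal families, i.e., the reference basis built from the dominant eigenmodes minimizes the mean representation error of the associated random field among r-term orthonormal expansions. -/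
open scoped RealInnerProductSpace

/-- for a bounded nonnegative self-adjoint operator `T` diagonalized by a
Hilbert basis with nonnegative eigenvalues in decreasing order, any orthonormal family
`v_0, …, v_{r−1}` captures at most the variance of the `r` dominant eigenmodes:
`∑_{i<r} ⟨T v_i, v_i⟩ ≤ ∑_{i<r} λ_i`. -/
theorem stmt_16 {H : Type*} [NormedAddCommGroup H] [InnerProductSpace ℝ H]
    [CompleteSpace H]
    (T : H →L[ℝ] H) (hsa : ∀ x y : H, ⟪T x, y⟫ = ⟪x, T y⟫)
    (hnn : ∀ x : H, 0 ≤ ⟪T x, x⟫)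
    (b : HilbertBasis ℕ ℝ H) (lam : ℕ → ℝ)
    (heig : ∀ i, T (b i) = lam i • b i)
    (hdec : Antitone lam) (hpos : ∀ i, 0 ≤ lam i)
    (r : ℕ) (v : Fin r → H) (hv : Orthonormal ℝ v) :
    ∑ i, ⟪T (v i), v i⟫ ≤ ∑ i ∈ Finset.range r, lam i := by
  classical
  set c : Fin r → ℕ → ℝ := fun i j => ⟪v i, b j⟫ ^ 2 with hc
  have hTb : ∀ (i : Fin r) (j : ℕ), ⟪T (v i), b j⟫ = lam j * ⟪v i, b j⟫ := by
    intro i j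
    rw [hsa, heig, real_inner_smul_right]
  -- spectral expansion of each diagonal entry
  have h1 : ∀ i, HasSum (fun j => lam j * c i j) ⟪T (v i), v i⟫ := by
    intro i
    have h := b.hasSum_inner_mul_inner (T (v i)) (v i)
    refine h.congr_fun fun j => ?_
    rw [hTb]
    simp only [hc]
    rw [real_inner_comm (b j) (v i)]; ring
  -- Parseval for each v i
  have h2 : ∀ i, HasSum (c i) 1 := by
    intro i
    have h := b.hasSum_inner_mul_inner (v i) (v i)
    have hvi : ⟪v i, v i⟫ = (1 : ℝ) := by
      have := hv.1 i
      rw [real_inner_self_eq_norm_sq, this]; norm_num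
    rw [hvi] at h
    refine h.congr_fun fun j => ?_
    simp only [hc]
    rw [real_inner_comm (b j) (v i)]; ring
  set s : ℕ → ℝ := fun j => ∑ i, c i j with hs
  have hsS : HasSum s (r : ℝ) := by
    have := hasSum_sum (s := (Finset.univ : Finset (Fin r)))
      (f := fun i j => c i j) (a := fun _ => (1 : ℝ)) (fun i _ => h2 i)
    simpa using this
  have hs0 : ∀ j, 0 ≤ s j := by
    intro j
    exact Finset.sum_nonneg fun i _ => sq_nonneg _
  have hs1 : ∀ j, s j ≤ 1 := by
    intro j
    have hb := hv.sum_inner_products_le (b j) (s := Finset.univ)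
    have hbj : ‖b j‖ = 1 := b.orthonormal.1 j
    rw [hbj] at hb
    calc s j = ∑ i, ‖⟪v i, b j⟫‖ ^ 2 := by
          refine Finset.sum_congr rfl fun i _ => ?_
          simp [hc, Real.norm_eq_abs, sq_abs]
      _ ≤ (1 : ℝ) ^ 2 := hb
      _ = 1 := one_pow 2
  -- total variance captured
  have hLHS : HasSum (fun j => lam j * s j) (∑ i, ⟪T (v i), v i⟫) := by
    have h := hasSum_sum (s := (Finset.univ : Finset (Fin r)))
      (f := fun i j => lam j * c i j) (a := fun i => ⟪T (v i), v i⟫) (fun i _ => h1 i)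
    refine h.congr_fun fun j => ?_
    rw [hs, Finset.mul_sum]
  -- the indicator-weighted eigenvalue sums
  have hfsum : ∑ j ∈ Finset.range r, (if j < r then lam j else 0)
      = ∑ j ∈ Finset.range r, lam j :=
    Finset.sum_congr rfl fun j hj => by simp [Finset.mem_range.mp hj]
  have hf : HasSum (fun j => if j < r then lam j else 0) (∑ j ∈ Finset.range r, lam j) := by
    rw [← hfsum]
    exact hasSum_sum_of_ne_finset_zero (by
      intro j hj
      simp only [Finset.mem_range, not_lt] at hj
      simp [Nat.not_lt.mpr hj])
  have hind : HasSum (fun j => if j < r then lam r else (0:ℝ)) ((r : ℝ) * lam r) := by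
    have h : HasSum (fun j => if j < r then lam r else (0:ℝ))
        (∑ j ∈ Finset.range r, (if j < r then lam r else (0:ℝ))) :=
      hasSum_sum_of_ne_finset_zero (s := Finset.range r)
      (f := fun j => if j < r then lam r else (0:ℝ)) (by
        intro j hj
        simp only [Finset.mem_range, not_lt] at hj
        simp [Nat.not_lt.mpr hj])
    have : ∑ j ∈ Finset.range r, (if j < r then lam r else (0:ℝ)) = (r : ℝ) * lam r := by
      rw [Finset.sum_congr rfl fun j hj => if_pos (Finset.mem_range.mp hj)]
      simp [mul_comm]
    rwa [this] at h
  have hg : HasSum (fun j => lam r * s j - (if j < r then lam r else 0)) 0 := by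
    have h := (hsS.mul_left (lam r)).sub hind
    have : lam r * (r : ℝ) - (r : ℝ) * lam r = 0 := by ring
    rwa [this] at h
  -- pointwise comparison
  have hpt : ∀ j, lam j * s j - (if j < r then lam j else 0)
      ≤ lam r * s j - (if j < r then lam r else 0) := by
    intro j
    by_cases hj : j < r
    · simp only [if_pos hj]
      have hlr : lam r ≤ lam j := hdec hj.le
      nlinarith [hs1 j, hs0 j]
    · simp only [if_neg hj]
      have hlr : lam j ≤ lam r := hdec (Nat.le_of_not_lt hj)
      nlinarith [hs0 j]
  have key := hasSum_le hpt (hLHS.sub hf) hg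
  linarith
end
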